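/- Let X be a hypergeometric random variable (the number of marked items in a uniformly random m-subset of an N-set containing K marked items) with mean μ = mK/N. Then for all a > 0: P(X ≥ μ + a) ≤ exp(−a²/(2μ + 2a/3)). -/

import Mathlib

open scoped BigOperators Classical
open Finset

lemma count_supersets {N : ℕ} (T : Finset (Fin N)) {j m : ℕ} (hT : T.card = j) (hjm : j ≤ m) :
    ((Finset.powersetCard m (univ : Finset (Fin N))).filter (fun S => T ⊆ S)).card
      = (N - j).choose (m - j) := by
  have hcompl : Tᶜ.card = N - j := by
    rw [Finset.card_compl, hT]; simp
  rw [← hcompl, ← Finset.card_powersetCard]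
  apply Finset.card_bij (fun S _ => S \ T)
  · intro S hS
    simp only [Finset.mem_filter, Finset.mem_powersetCard] at hS
    obtain ⟨⟨-, hScard⟩, hTS⟩ := hS
    simp only [Finset.mem_powersetCard]
    constructor
    · intro x hx; simp only [Finset.mem_sdiff] at hx; simp [hx.2]
    · rw [Finset.card_sdiff_of_subset hTS, hScard, hT]
  · intro S1 h1 S2 h2 heq
    simp only [Finset.mem_filter, Finset.mem_powersetCard] at h1 h2
    have := congrArg (· ∪ T) heq
    simpa [Finset.sdiff_union_of_subset h1.2, Finset.sdiff_union_of_subset h2.2] using this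
  · intro U hU
    simp only [Finset.mem_powersetCard] at hU
    have hdisj : Disjoint U T := Finset.disjoint_left.mpr fun {x} hx hxT => by
      have := hU.1 hx; simp only [Finset.mem_compl] at this; exact this hxT
    refine ⟨U ∪ T, ?_, ?_⟩
    · simp only [Finset.mem_filter, Finset.mem_powersetCard]
      refine ⟨⟨Finset.subset_univ _, ?_⟩, Finset.subset_union_right⟩
      rw [Finset.card_union_of_disjoint hdisj, hU.2, hT]
      omega
    · rw [Finset.union_sdiff_cancel_right hdisj]

lemma sum_choose_inter {N : ℕ} (M : Finset (Fin N)) {m j : ℕ} (hjm : j ≤ m) :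
    ∑ S ∈ powersetCard m (univ : Finset (Fin N)), (S ∩ M).card.choose j
      = M.card.choose j * (N - j).choose (m - j) := by
  have key : ∀ S : Finset (Fin N), (S ∩ M).card.choose j
      = ((powersetCard j M).filter (fun T => T ⊆ S)).card := by
    intro S
    rw [← Finset.card_powersetCard]
    congr 1
    ext T
    simp only [Finset.mem_powersetCard, Finset.mem_filter, Finset.subset_inter_iff]
    tauto
  simp only [key]
  simp only [Finset.card_filter]
  rw [Finset.sum_comm]
  have inner : ∀ T ∈ powersetCard j M,
      (∑ S ∈ powersetCard m (univ : Finset (Fin N)), if T ⊆ S then 1 else 0)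
        = (N - j).choose (m - j) := by
    intro T hT
    rw [← Finset.card_filter]
    exact count_supersets T (Finset.mem_powersetCard.mp hT).2 hjm
  rw [Finset.sum_congr rfl inner, Finset.sum_const, Finset.card_powersetCard, smul_eq_mul]

lemma aux_id {N m j : ℕ} (hjm : j ≤ m) (hm : m ≤ N) :
    (N - j).choose (m - j) * N.descFactorial j = N.choose m * m.descFactorial j := by
  have hjN : j ≤ N := hjm.trans hm
  have h1 : Nat.factorial (m - j) * m.descFactorial j = Nat.factorial m :=
    Nat.factorial_mul_descFactorial hjm
  have h2 : Nat.factorial (N - j) * N.descFactorial j = Nat.factorial N :=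
    Nat.factorial_mul_descFactorial hjN
  have h3 : N.choose m * Nat.factorial m * Nat.factorial (N - m) = Nat.factorial N :=
    Nat.choose_mul_factorial_mul_factorial hm
  have h4 : (N - j).choose (m - j) * Nat.factorial (m - j) * Nat.factorial (N - m)
      = Nat.factorial (N - j) := by
    have h5 : (N - j) - (m - j) = N - m := by omega
    have := Nat.choose_mul_factorial_mul_factorial (show m - j ≤ N - j by omega)
    rwa [h5] at this
  have hpos : 0 < Nat.factorial (m - j) * Nat.factorial (N - m) :=
    Nat.mul_pos (Nat.factorial_pos _) (Nat.factorial_pos _)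
  apply Nat.eq_of_mul_eq_mul_right hpos
  calc (N - j).choose (m - j) * N.descFactorial j * (Nat.factorial (m - j) * Nat.factorial (N - m))
      = ((N - j).choose (m - j) * Nat.factorial (m - j) * Nat.factorial (N - m)) * N.descFactorial j := by ring
    _ = Nat.factorial (N - j) * N.descFactorial j := by rw [h4]
    _ = Nat.factorial N := h2
    _ = N.choose m * Nat.factorial m * Nat.factorial (N - m) := h3.symm
    _ = N.choose m * (Nat.factorial (m - j) * m.descFactorial j) * Nat.factorial (N - m) := by rw [h1]
    _ = N.choose m * m.descFactorial j * (Nat.factorial (m - j) * Nat.factorial (N - m)) := by ring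

lemma term_ineq {N K m : ℕ} (hK : K ≤ N) (hm : m ≤ N) (i : ℕ) :
    N * ((K - i) * (m - i)) ≤ m * K * (N - i) := by
  rcases le_or_gt K i with h | h
  · simp [Nat.sub_eq_zero_of_le h]
  rcases le_or_gt m i with h' | h'
  · simp [Nat.sub_eq_zero_of_le h']
  have hiN : i < N := h.trans_le hK
  zify [h.le, h'.le, hiN.le]
  have hm' : (m:ℤ) ≤ (N:ℤ) := by exact_mod_cast hm
  have hi' : (i:ℤ) ≤ (m:ℤ) := by exact_mod_cast h'.le
  have e1 : (0:ℤ) ≤ (i:ℤ) * ((K:ℤ) * ((N:ℤ) - (m:ℤ))) :=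
    mul_nonneg (by positivity) (mul_nonneg (by positivity) (by linarith))
  have e2 : (0:ℤ) ≤ (i:ℤ) * ((N:ℤ) * ((m:ℤ) - (i:ℤ))) :=
    mul_nonneg (by positivity) (mul_nonneg (by positivity) (by linarith))
  nlinarith [e1, e2]

lemma prod_ineq {N K m : ℕ} (hK : K ≤ N) (hm : m ≤ N) (j : ℕ) :
    N ^ j * (K.descFactorial j * m.descFactorial j) ≤ (m * K) ^ j * N.descFactorial j := by
  have hN : N ^ j = ∏ _i ∈ range j, N := by simp
  have hmK : (m * K) ^ j = ∏ _i ∈ range j, m * K := by simp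
  rw [hN, hmK, Nat.descFactorial_eq_prod_range, Nat.descFactorial_eq_prod_range,
    Nat.descFactorial_eq_prod_range, ← Finset.prod_mul_distrib, ← Finset.prod_mul_distrib,
    ← Finset.prod_mul_distrib]
  exact Finset.prod_le_prod' (fun i _ => term_ineq hK hm i)

lemma moment_bound {N K m j : ℕ} (hK : K ≤ N) (hm : m ≤ N) (hjm : j ≤ m) :
    K.choose j * (N - j).choose (m - j) * (Nat.factorial j * N ^ j) ≤ N.choose m * (m * K) ^ j := by
  have hjN : j ≤ N := hjm.trans hm
  have hpos : 0 < N.descFactorial j := Nat.pos_of_ne_zero (fun hz => absurd (Nat.descFactorial_eq_zero_iff_lt.mp hz) (by omega))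
  apply Nat.le_of_mul_le_mul_right _ hpos
  calc K.choose j * (N - j).choose (m - j) * (Nat.factorial j * N ^ j) * N.descFactorial j
      = (Nat.factorial j * K.choose j) * N ^ j * ((N - j).choose (m - j) * N.descFactorial j) := by ring
    _ = K.descFactorial j * N ^ j * (N.choose m * m.descFactorial j) := by
        rw [← Nat.descFactorial_eq_factorial_mul_choose, aux_id hjm hm]
    _ = N.choose m * (N ^ j * (K.descFactorial j * m.descFactorial j)) := by ring
    _ ≤ N.choose m * ((m * K) ^ j * N.descFactorial j) :=
        Nat.mul_le_mul_left _ (prod_ineq hK hm j)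
    _ = N.choose m * (m * K) ^ j * N.descFactorial j := by ring

lemma g_nonneg {t : ℝ} (ht : 0 ≤ t) : 0 ≤ t + 2 + (t - 2) * Real.exp t := by
  set g : ℝ → ℝ := fun t => t + 2 + (t - 2) * Real.exp t with hg
  have hderiv : ∀ x : ℝ, HasDerivAt g (1 + (x - 1) * Real.exp x) x := by
    intro x
    have h1 : HasDerivAt (fun t : ℝ => (t - 2) * Real.exp t)
        (1 * Real.exp x + (x - 2) * Real.exp x) x :=
      ((hasDerivAt_id x).sub_const 2).mul (Real.hasDerivAt_exp x)
    have h2 : HasDerivAt (fun t : ℝ => t + 2) 1 x := (hasDerivAt_id x).add_const 2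
    have := h2.add h1
    refine this.congr_deriv ?_
    ring
  have hmono : MonotoneOn g (Set.Ici (0:ℝ)) := by
    apply monotoneOn_of_deriv_nonneg (convex_Ici 0)
    · exact (Continuous.continuousOn (by continuity))
    · intro x hx
      exact (hderiv x).differentiableAt.differentiableWithinAt
    · intro x hx
      rw [(hderiv x).deriv]
      have hx0 : 0 ≤ x := le_of_lt (by simpa using hx)
      have : (1 - x) * Real.exp x ≤ 1 := by
        have h := Real.one_sub_le_exp_neg x
        calc (1 - x) * Real.exp x ≤ Real.exp (-x) * Real.exp x := by
              apply mul_le_mul_of_nonneg_right h (Real.exp_nonneg x)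
          _ = 1 := by rw [← Real.exp_add]; simp
      nlinarith
  have h0 : g 0 = 0 := by simp [hg]
  have := hmono (Set.self_mem_Ici) (Set.mem_Ici.mpr ht) ht
  rw [h0] at this
  exact this

lemma exp_taylor_bound {t : ℝ} (ht : 0 ≤ t) :
    (1 - t / 3) * (Real.exp t - 1 - t) ≤ t ^ 2 / 2 := by
  set f : ℝ → ℝ := fun t => t ^ 2 / 2 - (1 - t / 3) * (Real.exp t - 1 - t) with hf
  have hderiv : ∀ x : ℝ, HasDerivAt f ((1/3) * (x + 2 + (x - 2) * Real.exp x)) x := by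
    intro x
    have h1 : HasDerivAt (fun t : ℝ => t ^ 2 / 2) x x := by
      have := (hasDerivAt_pow 2 x).div_const 2
      refine this.congr_deriv ?_; ring
    have h2 : HasDerivAt (fun t : ℝ => 1 - t / 3) (-(1/3)) x := by
      have := ((hasDerivAt_id x).div_const 3).const_sub 1
      exact this
    have h3 : HasDerivAt (fun t : ℝ => Real.exp t - 1 - t) (Real.exp x - 1) x := by
      have := ((Real.hasDerivAt_exp x).sub_const 1).sub (hasDerivAt_id x)
      exact this
    have h4 := h2.mul h3
    have := h1.sub h4
    refine this.congr_deriv ?_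
    ring
  have hmono : MonotoneOn f (Set.Ici (0:ℝ)) := by
    apply monotoneOn_of_deriv_nonneg (convex_Ici 0)
    · exact (Continuous.continuousOn (by continuity))
    · intro x hx
      exact (hderiv x).differentiableAt.differentiableWithinAt
    · intro x hx
      rw [(hderiv x).deriv]
      have hx0 : (0:ℝ) ≤ x := le_of_lt (by simpa using hx)
      have := g_nonneg hx0
      linarith
  have h0 : f 0 = 0 := by simp [hf]
  have := hmono (Set.self_mem_Ici) (Set.mem_Ici.mpr ht) ht
  rw [h0] at this
  simp only [hf] at this
  linarith

theorem stmt_18 (N m K : ℕ) (hm : m ≤ N) (M : Finset (Fin N)) (hK : M.card = K)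
    (a : ℝ) (ha : 0 < a) :
    ∀ μ : ℝ, μ = (m : ℝ) * (K : ℝ) / (N : ℝ) →
    -- Ω : all m-element subsets of an N-element set
    ∀ Ω : Finset (Finset (Fin N)),
      Ω = Finset.powersetCard m (Finset.univ : Finset (Fin N)) →
    ((Ω.filter (fun S => μ + a ≤ ((S ∩ M).card : ℝ))).card : ℝ) / (Ω.card : ℝ)
      ≤ Real.exp (-a ^ 2 / (2 * μ + 2 * a / 3)) := by
  intro μ hμ Ω hΩ
  subst hΩ
  have hμ0 : 0 ≤ μ := by rw [hμ]; positivity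
  by_cases hmK : m = 0 ∨ K = 0
  · -- degenerate case: the filter is empty
    have hempty : ∀ S ∈ powersetCard m (univ : Finset (Fin N)),
        ¬ (μ + a ≤ ((S ∩ M).card : ℝ)) := by
      intro S hS
      have hc : (S ∩ M).card = 0 := by
        rcases hmK with h | h
        · have : S = ∅ := by
            subst h
            simpa [Finset.powersetCard_zero] using hS
          simp [this]
        · have : M = ∅ := Finset.card_eq_zero.mp (by rw [hK, h])
          simp [this]
      rw [hc]
      push_cast
      linarith
    rw [Finset.filter_false_of_mem hempty]
    simp
    positivity
  · push_neg at hmK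
    obtain ⟨hm0, hK0⟩ := hmK
    have hm0' : 0 < m := Nat.pos_of_ne_zero hm0
    have hK0' : 0 < K := Nat.pos_of_ne_zero hK0
    have hN0 : 0 < N := lt_of_lt_of_le hm0' hm
    have hKN : K ≤ N := by
      rw [← hK]
      calc M.card ≤ Fintype.card (Fin N) := Finset.card_le_univ M
        _ = N := Fintype.card_fin N
    have hμpos : 0 < μ := by
      rw [hμ]; positivity
    set t : ℝ := a / (μ + a / 3) with htdef
    have hden : 0 < μ + a / 3 := by linarith
    have ht0 : 0 < t := div_pos ha hden
    set lam : ℝ := Real.exp t - 1 with hlam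
    have hlam0 : 0 ≤ lam := by
      have := Real.one_le_exp ht0.le
      simp [hlam]; linarith
    -- cardinality of Ω
    have hΩcard : (powersetCard m (univ : Finset (Fin N))).card = N.choose m := by
      rw [Finset.card_powersetCard, Finset.card_univ, Fintype.card_fin]
    have hchoosepos : 0 < (N.choose m : ℝ) := by
      exact_mod_cast Nat.choose_pos hm
    -- step: exp (t * k) expansion for S in Ω
    have hexp_eq : ∀ S ∈ powersetCard m (univ : Finset (Fin N)),
        Real.exp (t * ((S ∩ M).card : ℝ))
          = ∑ j ∈ Finset.range (m + 1), ((S ∩ M).card.choose j : ℝ) * lam ^ j := by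
      intro S hS
      obtain ⟨-, hScard⟩ := Finset.mem_powersetCard.mp hS
      have hkm : (S ∩ M).card ≤ m := by
        rw [← hScard]; exact Finset.card_le_card Finset.inter_subset_left
      set k := (S ∩ M).card with hk
      have h1 : Real.exp (t * (k : ℝ)) = (Real.exp t) ^ k := by
        rw [mul_comm, Real.exp_nat_mul]
      have h2 : (Real.exp t) ^ k = (lam + 1) ^ k := by rw [hlam]; ring_nf
      have h3 : (lam + 1) ^ k = ∑ j ∈ Finset.range (k + 1), (k.choose j : ℝ) * lam ^ j := by
        rw [add_pow]
        apply Finset.sum_congr rfl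
        intro j hj
        ring
      rw [h1, h2, h3]
      apply Finset.sum_subset
      · intro j hj
        simp only [Finset.mem_range] at hj ⊢
        omega
      · intro j hj hj'
        simp only [Finset.mem_range, not_lt] at hj hj'
        rw [Nat.choose_eq_zero_of_lt (by omega)]
        simp
    -- step: mgf bound
    have hmgf : ∑ S ∈ powersetCard m (univ : Finset (Fin N)),
        Real.exp (t * ((S ∩ M).card : ℝ)) ≤ (N.choose m : ℝ) * Real.exp (lam * μ) := by
      rw [Finset.sum_congr rfl hexp_eq, Finset.sum_comm]
      have step1 : ∀ j ∈ Finset.range (m + 1),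
          ∑ S ∈ powersetCard m (univ : Finset (Fin N)), ((S ∩ M).card.choose j : ℝ) * lam ^ j
            = ((K.choose j : ℝ) * ((N - j).choose (m - j) : ℝ)) * lam ^ j := by
        intro j hj
        rw [← Finset.sum_mul]
        congr 1
        have := sum_choose_inter M (show j ≤ m by simpa using Nat.lt_succ_iff.mp (Finset.mem_range.mp hj))
        rw [hK] at this
        exact_mod_cast congrArg (Nat.cast : ℕ → ℝ) this
      rw [Finset.sum_congr rfl step1]
      have step2 : ∀ j ∈ Finset.range (m + 1),
          ((K.choose j : ℝ) * ((N - j).choose (m - j) : ℝ)) * lam ^ j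
            ≤ (N.choose m : ℝ) * ((lam * μ) ^ j / (j.factorial : ℝ)) := by
        intro j hj
        have hjm : j ≤ m := Nat.lt_succ_iff.mp (Finset.mem_range.mp hj)
        have hnat := moment_bound hKN hm hjm
        have hreal : (K.choose j : ℝ) * ((N - j).choose (m - j) : ℝ) * ((j.factorial : ℝ) * (N : ℝ) ^ j)
            ≤ (N.choose m : ℝ) * ((m : ℝ) * (K : ℝ)) ^ j := by
          exact_mod_cast hnat
        have hfacpos : (0:ℝ) < (j.factorial : ℝ) := by exact_mod_cast j.factorial_pos
        have hNpow : (0:ℝ) < (N : ℝ) ^ j := by positivity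
        have hμj : μ ^ j = ((m : ℝ) * (K : ℝ)) ^ j / (N : ℝ) ^ j := by
          rw [hμ, div_pow]
        have hbase : (K.choose j : ℝ) * ((N - j).choose (m - j) : ℝ)
            ≤ (N.choose m : ℝ) * μ ^ j / (j.factorial : ℝ) := by
          rw [le_div_iff₀ hfacpos, hμj, ← mul_div_assoc, le_div_iff₀ hNpow]
          calc (K.choose j : ℝ) * ((N - j).choose (m - j) : ℝ) * (j.factorial : ℝ) * (N:ℝ)^j
              = (K.choose j : ℝ) * ((N - j).choose (m - j) : ℝ) * ((j.factorial : ℝ) * (N:ℝ)^j) := by ring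
            _ ≤ (N.choose m : ℝ) * ((m : ℝ) * (K : ℝ)) ^ j := hreal
        calc ((K.choose j : ℝ) * ((N - j).choose (m - j) : ℝ)) * lam ^ j
            ≤ ((N.choose m : ℝ) * μ ^ j / (j.factorial : ℝ)) * lam ^ j := by
              apply mul_le_mul_of_nonneg_right hbase (by positivity)
          _ = (N.choose m : ℝ) * ((lam * μ) ^ j / (j.factorial : ℝ)) := by
              rw [mul_pow]; ring
      calc ∑ j ∈ Finset.range (m + 1), ((K.choose j : ℝ) * ((N - j).choose (m - j) : ℝ)) * lam ^ j
          ≤ ∑ j ∈ Finset.range (m + 1), (N.choose m : ℝ) * ((lam * μ) ^ j / (j.factorial : ℝ)) :=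
            Finset.sum_le_sum step2
        _ = (N.choose m : ℝ) * ∑ j ∈ Finset.range (m + 1), (lam * μ) ^ j / (j.factorial : ℝ) := by
            rw [Finset.mul_sum]
        _ ≤ (N.choose m : ℝ) * Real.exp (lam * μ) := by
            apply mul_le_mul_of_nonneg_left _ hchoosepos.le
            exact Real.sum_le_exp_of_nonneg (by positivity) (m + 1)
    -- step: Chernoff
    set F := (powersetCard m (univ : Finset (Fin N))).filter
        (fun S => μ + a ≤ ((S ∩ M).card : ℝ)) with hF
    have hcher : (F.card : ℝ) * Real.exp (t * (μ + a))
        ≤ ∑ S ∈ powersetCard m (univ : Finset (Fin N)), Real.exp (t * ((S ∩ M).card : ℝ)) := by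
      calc (F.card : ℝ) * Real.exp (t * (μ + a))
          = ∑ _S ∈ F, Real.exp (t * (μ + a)) := by
            rw [Finset.sum_const, nsmul_eq_mul]
        _ ≤ ∑ S ∈ F, Real.exp (t * ((S ∩ M).card : ℝ)) := by
            apply Finset.sum_le_sum
            intro S hS
            have hcond : μ + a ≤ ((S ∩ M).card : ℝ) := (Finset.mem_filter.mp hS).2
            exact Real.exp_le_exp.mpr (mul_le_mul_of_nonneg_left hcond ht0.le)
        _ ≤ ∑ S ∈ powersetCard m (univ : Finset (Fin N)), Real.exp (t * ((S ∩ M).card : ℝ)) :=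
            Finset.sum_le_sum_of_subset_of_nonneg (Finset.filter_subset _ _)
              (fun S _ _ => (Real.exp_pos _).le)
    -- combine
    have hmain : (F.card : ℝ) / ((powersetCard m (univ : Finset (Fin N))).card : ℝ)
        ≤ Real.exp (lam * μ - t * (μ + a)) := by
      rw [hΩcard]
      calc (F.card : ℝ) / (N.choose m : ℝ)
          ≤ Real.exp (lam * μ) / Real.exp (t * (μ + a)) := by
            rw [div_le_div_iff₀ hchoosepos (Real.exp_pos _)]
            calc (F.card : ℝ) * Real.exp (t * (μ + a))
                ≤ (N.choose m : ℝ) * Real.exp (lam * μ) := le_trans hcher hmgf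
              _ = Real.exp (lam * μ) * (N.choose m : ℝ) := by ring
        _ = Real.exp (lam * μ - t * (μ + a)) := (Real.exp_sub _ _).symm
    refine le_trans hmain (Real.exp_le_exp.mpr ?_)
    -- exponent inequality
    have htaylor := exp_taylor_bound ht0.le
    have h1 : t * (μ + a / 3) = a := by
      rw [htdef]; field_simp
    have h2 : 1 - t / 3 = μ / (μ + a / 3) := by
      rw [htdef]; field_simp; ring
    have h3 : μ * (Real.exp t - 1 - t) ≤ t * a / 2 := by
      have h4 : (μ / (μ + a / 3)) * (Real.exp t - 1 - t) ≤ t ^ 2 / 2 := by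
        rw [← h2]; exact htaylor
      have h5 : μ * (Real.exp t - 1 - t) ≤ (t ^ 2 / 2) * (μ + a / 3) := by
        rw [div_mul_eq_mul_div, div_le_iff₀ hden] at h4
        linarith
      calc μ * (Real.exp t - 1 - t) ≤ (t ^ 2 / 2) * (μ + a / 3) := h5
        _ = t * (t * (μ + a / 3)) / 2 := by ring
        _ = t * a / 2 := by rw [h1]
    have h6 : -a ^ 2 / (2 * μ + 2 * a / 3) = -(t * a) / 2 := by
      rw [htdef]
      field_simp
    rw [h6, hlam]
    nlinarith [h3]
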